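/- Let X be a topological space, n ≥ 1, and let E₁, …, E_n ⊆ X. The smallest family of subsets of X containing E₁, …, E_n and closed under topological interior and binary intersection has at most 3^n − 1 elements: every member of this family is an intersection over a nonempty subcollection of the generators in which each E_j contributes either E_j, or interior(E_j), or nothing. -/
import Mathlib


/-- The family of subsets of a topological space `X` generated from the sets `E 0, …, E (n-1)`
by successive applications of topological interior and binary intersection: the smallest
collection of subsets of `X` containing all the `E j` and closed under these operations. -/
inductive iwGen {X : Type*} [TopologicalSpace X] {n : ℕ} (E : Fin n → Set X) : Set X → Prop
  | base (j : Fin n) : iwGen E (E j)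
  | interior {A : Set X} : iwGen E A → iwGen E (interior A)
  | inter {A B : Set X} : iwGen E A → iwGen E B → iwGen E (A ∩ B)

/-- Interpretation of a code in `Fin 3`: `0 ↦ E j`, `1 ↦ interior (E j)`, `2 ↦ univ`. -/
def iwC {X : Type*} [TopologicalSpace X] {n : ℕ} (E : Fin n → Set X) (j : Fin n)
    (a : Fin 3) : Set X :=
  if a = 0 then E j else if a = 1 then interior (E j) else Set.univ

lemma iwC_interior {X : Type*} [TopologicalSpace X] {n : ℕ} (E : Fin n → Set X) (j : Fin n)
    (a : Fin 3) : interior (iwC E j a) = iwC E j (if a = 2 then 2 else 1) := by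
  fin_cases a <;> simp [iwC]

/-- Combination of two codes corresponding to intersection. -/
def iwM (a b : Fin 3) : Fin 3 :=
  if a = 2 then b else if b = 2 then a else if a = 1 ∨ b = 1 then 1 else 0

lemma iwC_inter {X : Type*} [TopologicalSpace X] {n : ℕ} (E : Fin n → Set X) (j : Fin n)
    (a b : Fin 3) : iwC E j a ∩ iwC E j b = iwC E j (iwM a b) := by
  fin_cases a <;> fin_cases b <;>
    simp [iwC, iwM, Set.inter_eq_self_of_subset_right interior_subset,
      Set.inter_eq_self_of_subset_left interior_subset]

lemma iwGen_form {X : Type*} [TopologicalSpace X] {n : ℕ} {E : Fin n → Set X} {A : Set X}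
    (h : iwGen E A) : ∃ g : Fin n → Fin 3, g ≠ (fun _ => 2) ∧ A = ⋂ j, iwC E j (g j) := by
  induction h with
  | base j =>
      refine ⟨Function.update (fun _ => 2) j 0, ?_, ?_⟩
      · intro hc
        have := congrFun hc j
        simp at this
      · ext x
        simp only [Set.mem_iInter]
        constructor
        · intro hx j'
          by_cases hj : j' = j
          · subst hj; simpa [iwC] using hx
          · simp [iwC, Function.update_of_ne hj]
        · intro hx
          have := hx j
          simpa [iwC] using this
  | interior _ ih =>
      obtain ⟨g, hg, rfl⟩ := ih
      refine ⟨fun j => if g j = 2 then 2 else 1, ?_, ?_⟩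
      · intro hc
        apply hg
        funext j
        have := congrFun hc j
        by_cases h2 : g j = 2
        · exact h2
        · simp [h2] at this
      · rw [interior_iInter_of_finite]
        exact Set.iInter_congr fun j => iwC_interior E j (g j)
  | inter _ _ ihA ihB =>
      obtain ⟨g, hg, rfl⟩ := ihA
      obtain ⟨h, _, rfl⟩ := ihB
      refine ⟨fun j => iwM (g j) (h j), ?_, ?_⟩
      · intro hc
        apply hg
        funext j
        have := congrFun hc j
        simp only [iwM] at this
        by_cases h2 : g j = 2
        · exact h2
        · simp [h2] at this
          split_ifs at this <;> simp_all
      · rw [← Set.iInter_inter_distrib]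
        exact Set.iInter_congr fun j => iwC_inter E j (g j) (h j)

/-- For `n ≥ 1` subsets `E₁, …, E_n` of a topological space `X`, the smallest family of
subsets of `X` containing the `E j` and closed under interior and binary intersection has
at most `3 ^ n - 1` elements. -/
theorem interior_inter_generated_card {X : Type*} [TopologicalSpace X] {n : ℕ} (hn : 1 ≤ n)
    (E : Fin n → Set X) :
    {A : Set X | iwGen E A}.encard ≤ 3 ^ n - 1 := by
  have hsub : {A : Set X | iwGen E A} ⊆
      (fun g : Fin n → Fin 3 => ⋂ j, iwC E j (g j)) '' {(fun _ => 2)}ᶜ := by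
    intro A hA
    obtain ⟨g, hg, rfl⟩ := iwGen_form hA
    exact ⟨g, hg, rfl⟩
  refine (Set.encard_le_encard hsub).trans ?_
  refine (Set.encard_image_le _ _).trans ?_
  rw [Set.compl_eq_univ_diff, Set.encard_diff_singleton_of_mem (Set.mem_univ _),
    Set.encard_univ]
  have : ENat.card (Fin n → Fin 3) = (3 : ℕ∞) ^ n := by
    simp [ENat.card_eq_coe_fintype_card]
  rw [this]
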